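/- (Theorem: F_co ⊆ F_ui) If there exists a strictly positive function q₀ ∈ F_ui(G), then F_co(G) ⊆ F_ui(G). That is: if q₀ > 0 everywhere with {G(x,·)q₀ : x ∈ E} uniformly integrable, and q ∈ ℰ⁺ is such that Gq is bounded and K_q is compact on ℰ_b, then {G(x,·)q : x ∈ E} is uniformly integrable. -/

import Mathlib

open MeasureTheory ENNReal NNReal Filter

/-- `Gop μ G q x = ∫ G(x,y) q(y) dμ(y)`. -/
noncomputable def Gop {E : Type*} [MeasurableSpace E] (μ : Measure E)
    (G : E → E → ℝ≥0∞) (q : E → ℝ≥0∞) (x : E) : ℝ≥0∞ :=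
  ∫⁻ y, G x y * q y ∂μ

/-- The kernel operator `K_q f x = ∫ G(x,y) f(y) q(y) dμ(y)` acting on real functions. -/
noncomputable def Kq {E : Type*} [MeasurableSpace E] (μ : Measure E)
    (G : E → E → ℝ≥0∞) (q : E → ℝ≥0∞) (f : E → ℝ) (x : E) : ℝ :=
  ∫ y, (G x y * q y).toReal * f y ∂μ

/-- Compactness of `K_q` on the space of bounded measurable functions with sup-norm:
the image of the unit ball is totally bounded for the uniformity of uniform convergence. -/
def KqCompact {E : Type*} [MeasurableSpace E] (μ : Measure E)
    (G : E → E → ℝ≥0∞) (q : E → ℝ≥0∞) : Prop :=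
  TotallyBounded ((fun f => UniformFun.ofFun (Kq μ G q f)) ''
    {f : E → ℝ | Measurable f ∧ ∀ x, |f x| ≤ 1})

/-- `q ∈ F_co(G)`: `q` measurable, `Gq` bounded and `K_q` compact on `ℰ_b`. -/
def MemFco {E : Type*} [MeasurableSpace E] (μ : Measure E)
    (G : E → E → ℝ≥0∞) (q : E → ℝ≥0∞) : Prop :=
  Measurable q ∧ (∃ M : ℝ≥0, ∀ x, Gop μ G q x ≤ M) ∧ KqCompact μ G q

/-- `q ∈ F_ui(G)`: `q` measurable and `{G(x,·)q : x ∈ E}` is uniformly integrable. -/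
def MemFui {E : Type*} [MeasurableSpace E] (μ : Measure E)
    (G : E → E → ℝ≥0∞) (q : E → ℝ≥0∞) : Prop :=
  Measurable q ∧ ∀ ε : ℝ≥0∞, 0 < ε → ∃ g : E → ℝ≥0∞, Measurable g ∧
    (∫⁻ y, g y ∂μ) < ⊤ ∧
    ∀ x : E, (∫⁻ y in {y | g y ≤ G x y * q y}, G x y * q y ∂μ) ≤ ε

open Topology

/-- Theorem: F_co ⊆ F_ui: if `F_ui(G)` contains a strictly positive
function, then `F_co(G) ⊆ F_ui(G)`. -/
theorem stmt8 {E : Type*} [MeasurableSpace E] (μ : Measure E)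
    (G : E → E → ℝ≥0∞) (hG : Measurable (Function.uncurry G))
    (q₀ : E → ℝ≥0∞) (hq₀pos : ∀ x, 0 < q₀ x) (hq₀ : MemFui μ G q₀)
    (q : E → ℝ≥0∞) (hq : MemFco μ G q) :
    MemFui μ G q := by
  obtain ⟨hq₀m, hq₀ui⟩ := hq₀
  obtain ⟨hqm, ⟨M, hM⟩, hcpt⟩ := hq
  refine ⟨hqm, ?_⟩
  intro ε hε
  rcases eq_or_ne ε ⊤ with rfl | hεtop
  · exact ⟨fun _ => 0, measurable_const, by simp, fun x => le_top⟩
  have hε2ne : ε / 2 ≠ 0 := by simp [ENNReal.div_eq_zero_iff, hε.ne']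
  have hε2top : ε / 2 ≠ ⊤ := (ENNReal.div_lt_top hεtop (by norm_num)).ne
  have hGx : ∀ x, Measurable fun y => G x y * q y := fun x =>
    (hG.comp measurable_prodMk_left).mul hqm
  have hGx₀ : ∀ x, Measurable fun y => G x y * q₀ y := fun x =>
    (hG.comp measurable_prodMk_left).mul hq₀m
  have hMx : ∀ x, ∫⁻ y, G x y * q y ∂μ ≤ (M : ℝ≥0∞) := hM
  set A : ℕ → Set E := fun n => {y | (n : ℝ≥0∞) * q₀ y < q y} with hA
  have hAmeas : ∀ n, MeasurableSet (A n) := fun n =>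
    measurableSet_lt (hq₀m.const_mul _) hqm
  set ν : ℕ → E → ℝ≥0∞ := fun n x => ∫⁻ y in A n, G x y * q y ∂μ with hνdef
  have hνM : ∀ n x, ν n x ≤ (M : ℝ≥0∞) := fun n x =>
    (setLIntegral_le_lintegral _ _).trans (hMx x)
  have hνtop : ∀ n x, ν n x ≠ ⊤ := fun n x =>
    ((hνM n x).trans_lt ENNReal.coe_lt_top).ne
  -- pointwise convergence of ν n x to 0
  have hν0 : ∀ x, Tendsto (fun n => ν n x) atTop (𝓝 0) := by
    intro x
    set m : Measure E := μ.withDensity fun y => G x y * q y with hm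
    have hanti : Antitone A := by
      intro k n hkn y hy
      have hy' : (n : ℝ≥0∞) * q₀ y < q y := hy
      exact lt_of_le_of_lt (mul_le_mul_left (Nat.cast_le.mpr hkn) _) hy'
    have hae : ∀ᵐ y ∂μ, G x y * q y < ⊤ :=
      ae_lt_top (hGx x) (((hMx x).trans_lt ENNReal.coe_lt_top).ne)
    have hpt : ∀ y, G x y * q y < ⊤ → y ∈ ⋂ n, A n → G x y * q y = 0 := by
      intro y hlt hyS
      simp only [Set.mem_iInter] at hyS
      have hq₀fin : q₀ y ≠ ⊤ := by
        intro h
        have h1 := hyS 1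
        rw [hA] at h1
        simp only [Set.mem_setOf_eq, Nat.cast_one, one_mul, h] at h1
        exact not_top_lt h1
      have hqtop : q y = ⊤ := by
        by_contra hne
        obtain ⟨k, hk⟩ := ENNReal.exists_nat_gt
          (show q y / q₀ y ≠ ⊤ from (ENNReal.div_lt_top hne (hq₀pos y).ne').ne)
        have hle : q y ≤ (k : ℝ≥0∞) * q₀ y := by
          calc q y = q y / q₀ y * q₀ y := (ENNReal.div_mul_cancel (hq₀pos y).ne' hq₀fin).symm
            _ ≤ (k : ℝ≥0∞) * q₀ y := mul_le_mul_left hk.le _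
        exact absurd (hyS k) (not_lt.mpr hle)
      have hG0 : G x y = 0 := by
        by_contra h
        rw [hqtop, ENNReal.mul_top h] at hlt
        exact lt_irrefl _ hlt
      simp [hG0]
    have h0 : m (⋂ n, A n) = 0 := by
      rw [hm, withDensity_apply _ (MeasurableSet.iInter hAmeas)]
      have hz : (fun y => G x y * q y) =ᵐ[μ.restrict (⋂ n, A n)] 0 := by
        filter_upwards [ae_restrict_of_ae hae, ae_restrict_mem (MeasurableSet.iInter hAmeas)]
          with y h1 h2
        exact hpt y h1 h2
      rw [lintegral_congr_ae hz]; simp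
    have htendsto := tendsto_measure_iInter_atTop (μ := m)
      (fun n => (hAmeas n).nullMeasurableSet) hanti
      ⟨0, by rw [hm, withDensity_apply _ (hAmeas 0)]; exact hνtop 0 x⟩
    rw [h0] at htendsto
    have heq : (fun n => ν n x) = ⇑m ∘ A :=
      funext fun n => (withDensity_apply _ (hAmeas n)).symm
    rw [heq]
    exact htendsto
  -- Kq of the indicator of A n
  have hKf : ∀ n x, Kq μ G q (fun y => (A n).indicator 1 y) x = (ν n x).toReal := by
    intro n x
    have h1 : ∀ y, (G x y * q y).toReal * (A n).indicator (1 : E → ℝ) y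
        = ((A n).indicator (fun y => G x y * q y) y).toReal := by
      intro y; by_cases hy : y ∈ A n <;> simp [hy]
    have hmeas : AEMeasurable ((A n).indicator fun y => G x y * q y) μ :=
      ((hGx x).indicator (hAmeas n)).aemeasurable
    have haelt : ∀ᵐ y ∂μ, (A n).indicator (fun y => G x y * q y) y < ⊤ := by
      filter_upwards [ae_lt_top (hGx x) (((hMx x).trans_lt ENNReal.coe_lt_top).ne)] with y hy
      exact lt_of_le_of_lt (Set.indicator_le_self _ _ y) hy
    calc Kq μ G q (fun y => (A n).indicator 1 y) x
        = ∫ y, ((A n).indicator (fun y => G x y * q y) y).toReal ∂μ := by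
          simp only [Kq]; exact integral_congr_ae (Filter.Eventually.of_forall h1)
      _ = (∫⁻ y, (A n).indicator (fun y => G x y * q y) y ∂μ).toReal :=
          integral_toReal hmeas haelt
      _ = (ν n x).toReal := by rw [lintegral_indicator (hAmeas n)]
  -- Dini-type argument via total boundedness
  obtain ⟨n, hn⟩ : ∃ n, ∀ x, ν n x ≤ ε / 2 := by
    set δ : ℝ := (ε / 2).toReal with hδdef
    have hδpos : 0 < δ := ENNReal.toReal_pos hε2ne hε2top
    have hU : {p : ℝ × ℝ | dist p.1 p.2 < δ / 2} ∈ uniformity ℝ :=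
      Metric.dist_mem_uniformity (by linarith)
    have hV := (UniformFun.hasBasis_uniformity E ℝ).mem_of_mem hU
    obtain ⟨t, htf, hts⟩ := hcpt _ hV
    have hfmem : ∀ k : ℕ, UniformFun.ofFun (Kq μ G q fun y => (A k).indicator 1 y)
        ∈ ((fun f => UniformFun.ofFun (Kq μ G q f)) ''
          {f : E → ℝ | Measurable f ∧ ∀ x, |f x| ≤ 1}) := by
      intro k
      refine ⟨fun y => (A k).indicator 1 y, ⟨measurable_one.indicator (hAmeas k), fun x => ?_⟩, rfl⟩
      by_cases hx : x ∈ A k <;> simp [hx]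
    have hφ : ∀ k : ℕ, ∃ y ∈ t, ∀ x,
        dist (Kq μ G q (fun y => (A k).indicator 1 y) x) (UniformFun.toFun y x) < δ / 2 := by
      intro k
      have hmem := hts (hfmem k)
      simp only [Set.mem_iUnion] at hmem
      obtain ⟨y, hy, hmem⟩ := hmem
      exact ⟨y, hy, fun x => hmem x⟩
    choose φ hφt hφd using hφ
    have hpigeon : ∃ y₀, {k | φ k = y₀}.Infinite := by
      have : Finite t := htf
      obtain ⟨b, hb⟩ := Finite.exists_infinite_fiber (fun k : ℕ => (⟨φ k, hφt k⟩ : t))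
      have hset : (fun k : ℕ => (⟨φ k, hφt k⟩ : t)) ⁻¹' {b} = {k | φ k = (b : UniformFun E ℝ)} := by
        ext k; simp [Subtype.ext_iff]
      exact ⟨(b : UniformFun E ℝ), by rw [← hset]; exact Set.infinite_coe_iff.mp hb⟩
    obtain ⟨y₀, hy₀⟩ := hpigeon
    obtain ⟨n₀, hn₀⟩ := hy₀.nonempty
    refine ⟨n₀, fun x => ?_⟩
    have key : (ν n₀ x).toReal ≤ δ := by
      refine _root_.le_of_forall_pos_le_add fun η hη => ?_
      have htd : Tendsto (fun k => (ν k x).toReal) atTop (𝓝 0) := by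
        have := (ENNReal.tendsto_toReal (show (0:ℝ≥0∞) ≠ ⊤ by simp)).comp (hν0 x)
        simpa [Function.comp_def] using this
      obtain ⟨N, hN⟩ := Metric.tendsto_atTop.mp htd η hη
      obtain ⟨j, hjS, hj⟩ := hy₀.exists_gt N
      have d1 := hφd n₀ x
      have d2 := hφd j x
      rw [hKf n₀ x, hn₀] at d1
      rw [hKf j x, hjS] at d2
      have hdist : dist ((ν n₀ x).toReal) ((ν j x).toReal) < δ := by
        calc dist ((ν n₀ x).toReal) ((ν j x).toReal)
            ≤ dist ((ν n₀ x).toReal) (UniformFun.toFun y₀ x)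
              + dist (UniformFun.toFun y₀ x) ((ν j x).toReal) := dist_triangle _ _ _
          _ < δ / 2 + δ / 2 := by
              have := dist_comm (UniformFun.toFun y₀ x) ((ν j x).toReal)
              exact add_lt_add d1 (by rw [this]; exact d2)
          _ = δ := by ring
      have hsmall : (ν j x).toReal < η := by
        have := hN j hj.le
        rwa [Real.dist_eq, sub_zero, abs_of_nonneg ENNReal.toReal_nonneg] at this
      have habs := le_abs_self ((ν n₀ x).toReal - (ν j x).toReal)
      rw [Real.dist_eq] at hdist
      linarith
    have hle : ν n₀ x ≤ ENNReal.ofReal δ :=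
      (ENNReal.le_ofReal_iff_toReal_le (hνtop n₀ x) hδpos.le).mpr key
    rwa [hδdef, ENNReal.ofReal_toReal hε2top] at hle
  -- assemble the dominating function
  set c : ℝ≥0∞ := (n : ℝ≥0∞) + 1 with hc
  have hc0 : c ≠ 0 := by
    rw [hc]; intro h; exact one_ne_zero (add_eq_zero.mp h).2
  have hctop : c ≠ ⊤ := by
    rw [hc]; exact ENNReal.add_ne_top.mpr ⟨ENNReal.natCast_ne_top n, ENNReal.one_ne_top⟩
  obtain ⟨g₀, hg₀m, hg₀int, hg₀⟩ := hq₀ui (ε / 2 / c) (ENNReal.div_pos hε2ne hctop)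
  refine ⟨fun y => c * g₀ y, hg₀m.const_mul c, ?_, ?_⟩
  · rw [lintegral_const_mul c hg₀m]
    exact ENNReal.mul_lt_top hctop.lt_top hg₀int
  · intro x
    show ∫⁻ y in {y | c * g₀ y ≤ G x y * q y}, G x y * q y ∂μ ≤ ε
    set S : Set E := {y | c * g₀ y ≤ G x y * q y} with hS
    have hSmeas : MeasurableSet S := measurableSet_le (hg₀m.const_mul c) (hGx x)
    have hsplit : ∫⁻ y in S, G x y * q y ∂μ
        ≤ (∫⁻ y in S ∩ A n, G x y * q y ∂μ) + ∫⁻ y in S ∩ (A n)ᶜ, G x y * q y ∂μ := by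
      calc ∫⁻ y in S, G x y * q y ∂μ
          = ∫⁻ y in (S ∩ A n) ∪ (S ∩ (A n)ᶜ), G x y * q y ∂μ := by
            rw [Set.inter_union_compl]
        _ ≤ _ := lintegral_union_le _ _ _
    have h1 : ∫⁻ y in S ∩ A n, G x y * q y ∂μ ≤ ε / 2 :=
      (lintegral_mono_set Set.inter_subset_right).trans (hn x)
    have hsub : S ∩ (A n)ᶜ ⊆ {y | g₀ y ≤ G x y * q₀ y} := by
      rintro y ⟨hyS, hyA⟩
      have hle : q y ≤ (n : ℝ≥0∞) * q₀ y := not_lt.mp (by simpa only [hA, Set.mem_compl_iff, Set.mem_setOf_eq] using hyA)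
      have h2 : c * g₀ y ≤ c * (G x y * q₀ y) := by
        calc c * g₀ y ≤ G x y * q y := hyS
          _ ≤ G x y * ((n : ℝ≥0∞) * q₀ y) := mul_le_mul_right hle _
          _ = (n : ℝ≥0∞) * (G x y * q₀ y) := by ring
          _ ≤ c * (G x y * q₀ y) := mul_le_mul_left (by rw [hc]; exact le_self_add) _
      exact (ENNReal.mul_le_mul_iff_right hc0 hctop).mp h2
    have h2 : ∫⁻ y in S ∩ (A n)ᶜ, G x y * q y ∂μ ≤ ε / 2 := by
      calc ∫⁻ y in S ∩ (A n)ᶜ, G x y * q y ∂μ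
          ≤ ∫⁻ y in S ∩ (A n)ᶜ, c * (G x y * q₀ y) ∂μ := by
            refine setLIntegral_mono' (hSmeas.inter (hAmeas n).compl) fun y hy => ?_
            obtain ⟨hyS, hyA⟩ := hy
            calc G x y * q y ≤ G x y * ((n : ℝ≥0∞) * q₀ y) :=
                  mul_le_mul_right (not_lt.mp (by simpa only [hA, Set.mem_compl_iff, Set.mem_setOf_eq] using hyA)) _
              _ = (n : ℝ≥0∞) * (G x y * q₀ y) := by ring
              _ ≤ c * (G x y * q₀ y) := mul_le_mul_left (by rw [hc]; exact le_self_add) _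
        _ ≤ ∫⁻ y in {y | g₀ y ≤ G x y * q₀ y}, c * (G x y * q₀ y) ∂μ :=
            lintegral_mono_set hsub
        _ = c * ∫⁻ y in {y | g₀ y ≤ G x y * q₀ y}, G x y * q₀ y ∂μ :=
            lintegral_const_mul c (hGx₀ x)
        _ ≤ c * (ε / 2 / c) := mul_le_mul_right (hg₀ x) _
        _ ≤ ε / 2 := ENNReal.mul_div_le
    calc ∫⁻ y in S, G x y * q y ∂μ ≤ _ := hsplit
      _ ≤ ε / 2 + ε / 2 := add_le_add h1 h2
      _ = ε := ENNReal.add_halves ε
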